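/- arXiv:2403.11279 — 10 statements merged into one kernel-verified Lean document; each statement's English description precedes it below -/
import Mathlib

section
/- Let O ⊆ ℝ³ be a nonempty compact convex set, let r_a > 0 and 0 < γ_s < γ, and assume infDist 0 O > r_a (the target lies strictly outside the r_a-dilated obstacle). Let J₀ := closure(N_{γ_s}(D_{r_a}(O)) ∩ R_l). Then for every h ∈ J₀ there exists ε̄ > 0 such that for every ε ∈ (0, ε̄] the set {x ∈ R_e : ‖h‖ − ‖x‖ ≥ ε} is nonempty. (This is the paper's Lemma 1, guaranteeing nonemptiness of the switching set ER^h for every hit point h.) -/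
open Metric Set
open scoped RealInnerProductSpace

abbrev E3 := EuclideanSpace ℝ (Fin 3)

set_option maxHeartbeats 1000000

/-- Paper's Lemma 1: for every hit point `h` in the jump set `J₀` of the move-to-target
mode there exists `ε̄ > 0` such that for every `ε ∈ (0, ε̄]` the switching set
`ER^h = {x ∈ R_e : ‖h‖ − ‖x‖ ≥ ε}` is nonempty. -/
theorem stmt0 (O : Set E3) (hOne : O.Nonempty) (hOcomp : IsCompact O) (hOconv : Convex ℝ O)
    (ra γs γ : ℝ) (hra : 0 < ra) (hγs : 0 < γs) (hγsγ : γs < γ)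
    (htarget : ra < infDist (0 : E3) O)
    (Rl : Set E3)
    (hRl : Rl = {x : E3 | (ra ≤ infDist x O ∧ infDist x O ≤ ra + γ) ∧
      (segment ℝ 0 x ∩ interior {y : E3 | infDist y O ≤ ra}).Nonempty})
    (Re : Set E3)
    (hRe : Re = {x : E3 | ra ≤ infDist x O ∧ infDist x O ≤ ra + γ} \ Rl)
    (J0 : Set E3)
    (hJ0 : J0 = closure ({x : E3 | ra ≤ infDist x O ∧ infDist x O ≤ ra + γs} ∩ Rl)) :
    ∀ h ∈ J0, ∃ εbar : ℝ, 0 < εbar ∧ ∀ ε : ℝ, 0 < ε → ε ≤ εbar →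
      {x ∈ Re | ε ≤ ‖h‖ - ‖x‖}.Nonempty := by
  intro h hh
  set d := infDist (0 : E3) O with hd
  have hd0 : 0 < d := hra.trans htarget
  -- nearest point of O to the origin
  obtain ⟨p, hpO, hp⟩ := hOcomp.exists_infDist_eq_dist hOne 0
  have hpnorm : ‖p‖ = d := by rw [hd, hp, dist_zero_left]
  -- key variational inequality: O lies in the halfspace ⟪p, ·⟫ ≥ d²
  have hKey : ∀ o ∈ O, d ^ 2 ≤ ⟪p, o⟫ := by
    intro o hoO
    by_contra hcon
    push_neg at hcon
    have hpu : ⟪p, o - p⟫ < 0 := by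
      rw [inner_sub_right, real_inner_self_eq_norm_sq, hpnorm]
      linarith
    have hune : ‖o - p‖ ≠ 0 := by
      intro h0
      rw [norm_eq_zero] at h0
      rw [h0, inner_zero_right] at hpu
      exact lt_irrefl 0 hpu
    have hu2 : 0 < ‖o - p‖ ^ 2 := by positivity
    set s : ℝ := min 1 (-⟪p, o - p⟫ / ‖o - p‖ ^ 2) with hs
    have hs0 : 0 < s := lt_min one_pos (div_pos (by linarith) hu2)
    have hs1 : s ≤ 1 := min_le_left _ _
    have hsle : s * ‖o - p‖ ^ 2 ≤ -⟪p, o - p⟫ := by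
      have := min_le_right 1 (-⟪p, o - p⟫ / ‖o - p‖ ^ 2)
      calc s * ‖o - p‖ ^ 2 ≤ (-⟪p, o - p⟫ / ‖o - p‖ ^ 2) * ‖o - p‖ ^ 2 := by
            exact mul_le_mul_of_nonneg_right this (le_of_lt hu2)
        _ = -⟪p, o - p⟫ := by field_simp
    have hzO : (1 - s) • p + s • o ∈ O := hOconv hpO hoO (by linarith) (le_of_lt hs0) (by ring)
    have hzd : d ≤ ‖(1 - s) • p + s • o‖ := by
      have := infDist_le_dist_of_mem (x := (0 : E3)) hzO
      rwa [dist_zero_left] at this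
    have heq : (1 - s) • p + s • o = p + s • (o - p) := by
      rw [smul_sub]; module
    have hnorm2 : ‖p + s • (o - p)‖ ^ 2 = d ^ 2 + 2 * (s * ⟪p, o - p⟫) + s ^ 2 * ‖o - p‖ ^ 2 := by
      rw [norm_add_sq_real, real_inner_smul_right, norm_smul, hpnorm]
      rw [mul_pow]
      have : |s| = s := abs_of_pos hs0
      rw [Real.norm_eq_abs, this]
    have hd2 : d ^ 2 ≤ ‖p + s • (o - p)‖ ^ 2 := by
      have h1 : (0:ℝ) ≤ ‖p + s • (o - p)‖ := norm_nonneg _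
      nlinarith [heq ▸ hzd]
    rw [hnorm2] at hd2
    nlinarith [mul_le_mul_of_nonneg_left hsle (le_of_lt hs0), hs0]
  -- distance from points of the segment [0,p] to O
  have hSeg : ∀ c : ℝ, c ≤ 1 → (1 - c) * d ≤ infDist (c • p) O := by
    intro c hc
    by_contra hcon
    push_neg at hcon
    obtain ⟨o, hoO, hdist⟩ := (infDist_lt_iff hOne).1 hcon
    have h1 : ⟪p, o - c • p⟫ ≤ ‖p‖ * ‖o - c • p‖ := real_inner_le_norm _ _
    have h2 : ⟪p, o - c • p⟫ = ⟪p, o⟫ - c * d ^ 2 := by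
      rw [inner_sub_right, real_inner_smul_right, real_inner_self_eq_norm_sq, hpnorm]
    have h3 : d ^ 2 ≤ ⟪p, o⟫ := hKey o hoO
    have h4 : dist (c • p) o = ‖o - c • p‖ := by rw [dist_eq_norm, norm_sub_rev]
    rw [h4] at hdist
    rw [hpnorm] at h1
    nlinarith [norm_nonneg (o - c • p)]
  -- every landing point is at distance at least d - ra from the origin
  have hRlNorm : ∀ y ∈ Rl, d - ra ≤ ‖y‖ := by
    intro y hy
    rw [hRl] at hy
    obtain ⟨-, w, hwseg, hwint⟩ := hy
    have hwD : infDist w O ≤ ra := by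
      have hmem : w ∈ {y : E3 | infDist y O ≤ ra} := interior_subset hwint
      exact hmem
    obtain ⟨a, b, ha, hb, hab, hw⟩ := hwseg
    have hwb : w = b • y := by rw [← hw, smul_zero, zero_add]
    have hwle : ‖w‖ ≤ ‖y‖ := by
      rw [hwb, norm_smul, Real.norm_eq_abs, abs_of_nonneg hb]
      have hb1 : b ≤ 1 := by linarith
      nlinarith [norm_nonneg y]
    have htri : d ≤ infDist w O + dist (0 : E3) w := infDist_le_infDist_add_dist
    rw [dist_zero_left] at htri
    linarith
  have hhnorm : d - ra ≤ ‖h‖ := by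
    have hsub : ({x : E3 | ra ≤ infDist x O ∧ infDist x O ≤ ra + γs} ∩ Rl)
        ⊆ {y : E3 | d - ra ≤ ‖y‖} := fun y hy => hRlNorm y hy.2
    have hcl : IsClosed {y : E3 | d - ra ≤ ‖y‖} := isClosed_le continuous_const continuous_norm
    have := closure_minimal hsub hcl
    rw [hJ0] at hh
    exact this hh
  -- the witness point
  set γ' : ℝ := min γ ((d - ra) / 2) with hγ'
  have hγpos : 0 < γ := hγs.trans hγsγ
  have hγ'0 : 0 < γ' := lt_min hγpos (by linarith)
  have hγ'γ : γ' ≤ γ := min_le_left _ _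
  have hγ'd : ra + γ' ≤ d := by
    have := min_le_right γ ((d - ra) / 2)
    have hrd : ra < d := htarget
    simp only [hγ'] at *
    nlinarith
  set t : ℝ := (ra + γ') / d with ht
  have ht0 : 0 < t := by positivity
  have ht1 : t ≤ 1 := by rw [ht, div_le_one hd0]; linarith
  have htd : t * d = ra + γ' := by rw [ht]; field_simp
  set x' : E3 := (1 - t) • p with hx'
  have hx'norm : ‖x'‖ = d - ra - γ' := by
    rw [hx', norm_smul, Real.norm_eq_abs, abs_of_nonneg (by linarith), hpnorm]
    nlinarith
  -- infDist x' O bounds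
  have hx'lower : ra + γ' ≤ infDist x' O := by
    have := hSeg (1 - t) (by linarith)
    rw [hx']
    calc ra + γ' = (1 - (1 - t)) * d := by rw [← htd]; ring
      _ ≤ infDist ((1 - t) • p) O := this
  have hx'upper : infDist x' O ≤ ra + γ := by
    have h1 : infDist x' O ≤ dist x' p := infDist_le_dist_of_mem hpO
    have h2 : dist x' p = t * d := by
      rw [hx', dist_eq_norm]
      have : (1 - t) • p - p = (-t) • p := by module
      rw [this, norm_smul, Real.norm_eq_abs, abs_neg, abs_of_pos ht0, hpnorm]
    rw [h2, htd] at h1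
    linarith
  -- x' is not a landing point
  have hx'notRl : x' ∉ Rl := by
    rw [hRl]
    rintro ⟨-, w, hwseg, hwint⟩
    have hwD : infDist w O ≤ ra := by
      have hmem : w ∈ {y : E3 | infDist y O ≤ ra} := interior_subset hwint
      exact hmem
    obtain ⟨a, b, ha, hb, hab, hw⟩ := hwseg
    have hwb : w = (b * (1 - t)) • p := by
      rw [← hw, smul_zero, zero_add, hx', smul_smul]
    have hb1 : b ≤ 1 := by linarith
    have hc1 : b * (1 - t) ≤ 1 := by nlinarith
    have := hSeg (b * (1 - t)) hc1
    rw [← hwb] at this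
    have hge : t * d ≤ (1 - b * (1 - t)) * d := by
      have h1 : 0 ≤ ((1 - t) * (1 - b)) * d :=
        mul_nonneg (mul_nonneg (by linarith) (by linarith)) hd0.le
      nlinarith
    rw [htd] at hge
    linarith
  have hx'Re : x' ∈ Re := by
    rw [hRe, mem_diff, mem_setOf_eq]
    exact ⟨⟨by linarith, hx'upper⟩, hx'notRl⟩
  refine ⟨γ', hγ'0, fun ε hε0 hεγ' => ⟨x', hx'Re, ?_⟩⟩
  rw [hx'norm]
  linarith
end

section
/- Let O ⊆ ℝ³ be a nonempty compact convex set, let r_a > 0 and γ > 0, and assume infDist 0 O > r_a. Let p ∈ D_{r_a}(O) be a point with ‖p‖ = infDist 0 (D_{r_a}(O)) (a nearest point of the closed convex set D_{r_a}(O) to the origin). Then the segment [0,p] does not meet the interior of D_{r_a}(O); consequently p ∉ R_l, and since infDist p O = r_a, the point p belongs to the exit region R_e. (This is the claim in the proof of Lemma 1 that the projection of the target onto the dilated obstacle does not belong to the landing region.) -/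
open Metric Set
open scoped RealInnerProductSpace

/-- Claim in the proof of Lemma 1: the nearest point `p` of the `r_a`-dilated obstacle
to the target (origin) is such that the segment `[0,p]` misses the interior of the
dilation; hence `p ∉ R_l`, `infDist p O = r_a`, and `p` lies in the exit region `R_e`. -/
theorem stmt1 (O : Set E3) (hOne : O.Nonempty) (hOcomp : IsCompact O) (hOconv : Convex ℝ O)
    (ra γ : ℝ) (hra : 0 < ra) (hγ : 0 < γ)
    (htarget : ra < infDist (0 : E3) O)
    (D : Set E3) (hD : D = {x : E3 | infDist x O ≤ ra})
    (Rl : Set E3)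
    (hRl : Rl = {x : E3 | (ra ≤ infDist x O ∧ infDist x O ≤ ra + γ) ∧
      (segment ℝ 0 x ∩ interior D).Nonempty})
    (Re : Set E3)
    (hRe : Re = {x : E3 | ra ≤ infDist x O ∧ infDist x O ≤ ra + γ} \ Rl)
    (p : E3) (hpD : p ∈ D) (hpmin : ‖p‖ = infDist (0 : E3) D) :
    segment ℝ 0 p ∩ interior D = ∅ ∧ p ∉ Rl ∧ infDist p O = ra ∧ p ∈ Re := by
  have hOsubD : O ⊆ D := by
    intro x hx
    rw [hD]
    simp [infDist_zero_of_mem hx, hra.le]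
  have hDne : D.Nonempty := hOne.mono hOsubD
  -- main claim: the segment misses the interior
  have hseg : segment ℝ 0 p ∩ interior D = ∅ := by
    rw [eq_empty_iff_forall_notMem]
    rintro x ⟨hxseg, hxint⟩
    obtain ⟨a, b, ha, hb, hab, hx⟩ := hxseg
    have hxv : x = b • p := by rw [← hx]; simp
    rcases eq_or_ne x 0 with hx0 | hx0
    · -- then 0 ∈ interior D ⊆ D, contradicting htarget
      have : (0 : E3) ∈ D := interior_subset (hx0 ▸ hxint)
      rw [hD] at this
      exact absurd this (by simpa using htarget.not_ge)
    · have hxnorm : 0 < ‖x‖ := norm_pos_iff.mpr hx0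
      obtain ⟨ε, hε, hball⟩ := Metric.isOpen_iff.mp isOpen_interior x hxint
      set c : ℝ := max 0 (1 - ε / (2 * ‖x‖)) with hc
      have hc0 : 0 ≤ c := le_max_left _ _
      have hc1 : c < 1 := by
        apply max_lt one_pos
        have : 0 < ε / (2 * ‖x‖) := by positivity
        linarith
      have hcge : 1 - ε / (2 * ‖x‖) ≤ c := le_max_right _ _
      have hx' : c • x ∈ D := by
        apply interior_subset
        apply hball
        have heq : c • x - x = (c - 1) • x := by rw [sub_smul, one_smul]
        have : dist (c • x) x = (1 - c) * ‖x‖ := by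
          rw [dist_eq_norm, heq, norm_smul, Real.norm_eq_abs,
            abs_of_nonpos (by linarith)]
          ring
        rw [Metric.mem_ball, this]
        have h1 : (1 - c) * ‖x‖ ≤ ε / (2 * ‖x‖) * ‖x‖ := by
          apply mul_le_mul_of_nonneg_right (by linarith) hxnorm.le
        have h2 : ε / (2 * ‖x‖) * ‖x‖ = ε / 2 := by
          field_simp
        linarith
      have hlt : infDist (0 : E3) D ≤ ‖c • x‖ := by
        simpa [dist_zero_left] using infDist_le_dist_of_mem (x := (0 : E3)) hx'
      have hxle : ‖x‖ ≤ ‖p‖ := by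
        rw [hxv, norm_smul, Real.norm_eq_abs, abs_of_nonneg hb]
        nlinarith [norm_nonneg p]
      have : ‖c • x‖ < ‖x‖ := by
        rw [norm_smul, Real.norm_eq_abs, abs_of_nonneg hc0]
        nlinarith
      rw [← hpmin] at hlt
      linarith
  have hpnotint : p ∉ interior D := by
    intro h
    have : p ∈ segment ℝ 0 p ∩ interior D := ⟨right_mem_segment ℝ 0 p, h⟩
    rw [hseg] at this
    exact this
  have hpinf : infDist p O = ra := by
    refine le_antisymm (by rw [hD] at hpD; exact hpD) ?_
    by_contra h
    push_neg at h
    have hopen : IsOpen {x : E3 | infDist x O < ra} :=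
      isOpen_lt (continuous_infDist_pt O) continuous_const
    have hsub : {x : E3 | infDist x O < ra} ⊆ D := by
      intro x hx
      rw [hD]
      simp only [mem_setOf_eq] at hx ⊢
      exact hx.le
    exact hpnotint (interior_maximal hsub hopen h)
  have hpnotRl : p ∉ Rl := by
    rw [hRl]
    rintro ⟨-, hne⟩
    rw [hseg] at hne
    exact hne.ne_empty rfl
  refine ⟨hseg, hpnotRl, hpinf, ?_⟩
  rw [hRe]
  exact ⟨⟨hpinf.ge, by rw [hpinf]; linarith⟩, hpnotRl⟩
end

section
/- Let O ⊆ ℝ³ be a nonempty compact convex set, r > 0, a ∈ ℝ³ with ‖a‖ = 1, h ∈ ℝ³, and let H := {x ∈ ℝ³ : ⟪a, x − h⟫ = 0} be the hyperplane through h orthogonal to a. Assume H ∩ interior(D_r(O)) ≠ ∅. Then for every q ∈ H with infDist q O ≥ r, the vector q − Π(q,O) is not parallel to a; that is, P(a)(q − Π(q,O)) ≠ 0, equivalently ⟪q − Π(q,O), P(a)(q − Π(q,O))⟫ > 0. (This is the key geometric claim in the proof of Lemma 4 establishing that the obstacle-avoidance vector never vanishes on the hyperplane when the hyperplane cuts the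 interior of the dilated obstacle.) -/
open Metric Set
open scoped RealInnerProductSpace

/-- Orthogonal projection onto the plane orthogonal to the unit vector `a`. -/
noncomputable def Pproj (a x : E3) : E3 := x - ⟪a, x⟫ • a

/-- Key geometric claim in the proof of Lemma 4: if the hyperplane `H` through `h`
orthogonal to `a` meets the interior of the `r`-dilated obstacle, then for every point
`q ∈ H` outside the open dilation, the vector from its projection `p = Π(q,O)` to `q`
is not parallel to `a`: `P(a)(q − p) ≠ 0` and `⟪q − p, P(a)(q − p)⟫ > 0`. -/
theorem stmt2 (O : Set E3) (hOne : O.Nonempty) (hOcomp : IsCompact O) (hOconv : Convex ℝ O)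
    (r : ℝ) (hr : 0 < r) (a h : E3) (ha : ‖a‖ = 1)
    (H : Set E3) (hH : H = {x : E3 | ⟪a, x - h⟫ = 0})
    (hHint : (H ∩ interior {x : E3 | infDist x O ≤ r}).Nonempty)
    (q : E3) (hqH : q ∈ H) (hqr : r ≤ infDist q O)
    (p : E3) (hp : p ∈ O) (hproj : ‖q - p‖ = infDist q O) :
    Pproj a (q - p) ≠ 0 ∧ 0 < ⟪q - p, Pproj a (q - p)⟫ := by
  have hvar : ∀ o ∈ O, ⟪q - p, o - p⟫ ≤ 0 := by
    rw [← norm_eq_iInf_iff_real_inner_le_zero hOconv hp]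
    rw [hproj, infDist_eq_iInf]
    simp only [dist_eq_norm]
  have key : Pproj a (q - p) ≠ 0 := by
    intro hw
    set t : ℝ := ⟪a, q - p⟫ with ht
    have hv : q - p = t • a := by
      have : (q - p) - t • a = 0 := hw
      linear_combination (norm := module) this
    have htne : |t| = infDist q O := by
      rw [← hproj, hv, norm_smul, ha, mul_one, Real.norm_eq_abs]
    have htpos : (0 : ℝ) < |t| := lt_of_lt_of_le hr (htne ▸ hqr)
    set u : E3 := (t / |t|) • a with hu
    -- z in H ∩ interior of dilation
    obtain ⟨z, hzH, hzint⟩ := hHint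
    obtain ⟨ε, hε, hball⟩ := Metric.mem_nhds_iff.mp (mem_interior_iff_mem_nhds.mp hzint)
    have hx : z + (ε / 2) • u ∈ {x : E3 | infDist x O ≤ r} := by
      apply hball
      rw [Metric.mem_ball, dist_eq_norm]
      have hun : ‖u‖ = 1 := by
        rw [hu, norm_smul, ha, mul_one, Real.norm_eq_abs, abs_div, abs_abs,
          div_self htpos.ne']
      have : ‖z + (ε / 2) • u - z‖ = ε / 2 := by
        simp [norm_smul, hun, abs_of_pos hε]
      rw [this]; linarith
    set x : E3 := z + (ε / 2) • u with hxdef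
    obtain ⟨o, ho, hdo⟩ := hOcomp.exists_infDist_eq_dist hOne x
    have hxo : ‖x - o‖ ≤ r := by
      rw [← dist_eq_norm, ← hdo]; exact hx
    -- key inner product computations
    have h1 : ⟪u, x - o⟫ ≤ r := by
      calc ⟪u, x - o⟫ ≤ ‖u‖ * ‖x - o‖ := real_inner_le_norm _ _
        _ ≤ 1 * r := by
            apply mul_le_mul _ hxo (norm_nonneg _) zero_le_one
            rw [hu, norm_smul, ha, mul_one, Real.norm_eq_abs, abs_div, abs_abs,
              div_self htpos.ne']
        _ = r := one_mul r
    have h2 : ⟪u, o - p⟫ ≤ 0 := by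
      have h2a : t * ⟪a, o - p⟫ ≤ 0 := by
        have := hvar o ho
        rw [hv, real_inner_smul_left] at this
        exact this
      have : ⟪u, o - p⟫ = (t * ⟪a, o - p⟫) / |t| := by
        rw [hu, real_inner_smul_left]; ring
      rw [this]
      exact div_nonpos_of_nonpos_of_nonneg h2a (abs_nonneg t)
    have h3 : ⟪u, q - p⟫ = |t| := by
      rw [hu, hv, real_inner_smul_left, real_inner_smul_right,
        real_inner_self_eq_norm_sq, ha, one_pow, mul_one, div_mul_eq_mul_div,
        ← abs_mul_abs_self, mul_div_assoc, div_self htpos.ne', mul_one]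
    have h4 : ⟪u, q - z⟫ = 0 := by
      rw [hH] at hqH hzH
      have : ⟪a, q - z⟫ = 0 := by
        have e : q - z = (q - h) - (z - h) := by abel
        rw [e, inner_sub_right, hqH, hzH, sub_zero]
      rw [hu, real_inner_smul_left, this, mul_zero]
    have h5 : ⟪u, x - z⟫ = ε / 2 := by
      have : x - z = (ε / 2) • u := by rw [hxdef]; abel
      rw [this, real_inner_smul_right, real_inner_self_eq_norm_sq, hu, norm_smul,
        ha, mul_one, Real.norm_eq_abs, abs_div, abs_abs, div_self htpos.ne']
      ring
    -- combine: ⟪u,x⟫ = ⟪u,x-o⟫ + ⟪u,o-p⟫ + ⟪u,p-q⟫ + ⟪u,q-z⟫ + ⟪u,z⟫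
    have hdecomp : ⟪u, x - z⟫ = ⟪u, x - o⟫ + ⟪u, o - p⟫ - ⟪u, q - p⟫ + ⟪u, q - z⟫ := by
      rw [← inner_add_right, ← inner_sub_right, ← inner_add_right]
      congr 1
      abel
    rw [h5, h3, h4] at hdecomp
    have : |t| ≤ r := by linarith
    have : r ≤ |t| := htne ▸ hqr
    linarith
  refine ⟨key, ?_⟩
  have hcalc : ⟪q - p, Pproj a (q - p)⟫ = ‖Pproj a (q - p)‖ ^ 2 := by
    set v := q - p
    set c : ℝ := ⟪a, v⟫ with hc
    have : Pproj a v = v - c • a := rfl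
    rw [this, ← real_inner_self_eq_norm_sq]
    simp only [inner_sub_left, inner_sub_right, real_inner_smul_left,
      real_inner_smul_right, real_inner_self_eq_norm_sq, ha]
    rw [real_inner_comm a v, ← hc, norm_smul, ha, mul_one, Real.norm_eq_abs]
    rw [sq_abs]
    ring
  rw [hcalc]
  exact pow_pos (norm_pos_iff.mpr key) 2
end

section
/- Let O ⊆ ℝ³ be a nonempty compact convex set, r > 0, and x ∈ ℝ³ with infDist x O = r. Then every vector v ∈ ℝ³ with ⟪v, x − Π(x,O)⟫ ≥ 0 belongs to the tangent cone tangentConeAt ℝ {y ∈ ℝ³ : infDist y O ≥ r} x. (This is the tangent-cone inclusion at the inner boundary of the neighborhood N_γ(D_r(O)) used in the viability arguments of Lemmas 3 and 4.) -/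
open Metric Set Filter
open scoped RealInnerProductSpace

/-- Tangent-cone inclusion at the inner boundary of the neighborhood `N_γ(D_r(O))`
(Lemmas 3 and 4): at a point `x` with `infDist x O = r`, every vector `v` with
`⟪v, x − Π(x,O)⟫ ≥ 0` lies in the tangent cone of `{y : infDist y O ≥ r}` at `x`. -/
theorem stmt6 (O : Set E3) (hOne : O.Nonempty) (hOcomp : IsCompact O) (hOconv : Convex ℝ O)
    (r : ℝ) (hr : 0 < r) (x : E3) (hx : infDist x O = r)
    (p : E3) (hp : p ∈ O) (hproj : ‖x - p‖ = infDist x O)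
    (v : E3) (hv : 0 ≤ ⟪v, x - p⟫) :
    v ∈ tangentConeAt ℝ {y : E3 | r ≤ infDist y O} x := by
  have hnp : ‖x - p‖ = r := hproj.trans hx
  -- projection characterization
  have hchar : ∀ q ∈ O, ⟪x - p, q - p⟫ ≤ 0 := by
    rw [← norm_eq_iInf_iff_real_inner_le_zero hOconv hp]
    rw [hproj, infDist_eq_iInf]
    simp_rw [dist_eq_norm]
  -- main geometric fact: points on the outward ray stay at distance ≥ r
  have key : ∀ t : ℝ, 0 ≤ t → r ≤ infDist (x + t • v) O := by
    intro t ht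
    haveI : Nonempty O := hOne.to_subtype
    rw [infDist_eq_iInf]
    refine le_ciInf fun ⟨q, hq⟩ => ?_
    have h1 : r * r ≤ ⟪x + t • v - q, x - p⟫ := by
      have e1 : ⟪x + t • v - q, x - p⟫
          = ⟪x - p, x - p⟫ + t * ⟪v, x - p⟫ - ⟪x - p, q - p⟫ := by
        have : x + t • v - q = (x - p) + t • v - (q - p) := by abel
        rw [this]
        rw [inner_sub_left, inner_add_left, inner_smul_left]
        rw [real_inner_comm (q - p) (x - p)]
        simp only [starRingEnd_apply, star_trivial]
      rw [e1, real_inner_self_eq_norm_mul_norm, hnp]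
      nlinarith [hchar q hq, mul_nonneg ht hv]
    have h2 : ⟪x + t • v - q, x - p⟫ ≤ ‖x + t • v - q‖ * r := by
      calc ⟪x + t • v - q, x - p⟫ ≤ ‖x + t • v - q‖ * ‖x - p‖ :=
            real_inner_le_norm _ _
        _ = ‖x + t • v - q‖ * r := by rw [hnp]
    have := h1.trans h2
    have hd : r ≤ ‖x + t • v - q‖ := le_of_mul_le_mul_right (by linarith) hr
    simpa [dist_eq_norm] using hd
  rw [mem_tangentConeAt_iff_exists_seq_norm_tendsto_atTop]
  refine ⟨fun n => (n : ℝ) + 1, fun n => ((n : ℝ) + 1)⁻¹ • v, ?_, ?_, ?_⟩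
  swap
  · filter_upwards with n
    have hpos : (0 : ℝ) < (n : ℝ) + 1 := by positivity
    exact key _ (le_of_lt (inv_pos.mpr hpos))
  · have : Tendsto (fun n : ℕ => (n : ℝ) + 1) atTop atTop :=
      tendsto_atTop_add_const_right _ 1 tendsto_natCast_atTop_atTop
    refine this.congr' ?_
    filter_upwards with n
    rw [Real.norm_eq_abs, abs_of_pos (by positivity)]
  · have : ∀ n : ℕ, ((n : ℝ) + 1) • (((n : ℝ) + 1)⁻¹ • v) = v := by
      intro n
      rw [smul_smul, mul_inv_cancel₀ (by positivity), one_smul]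
    simp only [this]
    exact tendsto_const_nhds
end

section
/- Let O ⊆ ℝ³ be a nonempty compact convex set, r > 0, and x ∈ ℝ³ with infDist x O = r. Then every vector v ∈ ℝ³ with ⟪v, x − Π(x,O)⟫ ≤ 0 belongs to the tangent cone tangentConeAt ℝ {y ∈ ℝ³ : infDist y O ≤ r} x. (This is the tangent-cone inclusion at the outer boundary of the neighborhood N_γ(D_r(O)) used in the viability arguments of Lemmas 3 and 4; note that {y : infDist y O ≤ r} is a convex body containing the closed ball of radius r around Π(x,O).) -/
open Metric Set Filter
open scoped RealInnerProductSpace Topology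

/-- Tangent-cone inclusion at the outer boundary of the neighborhood `N_γ(D_r(O))`
(Lemmas 3 and 4): at a point `x` with `infDist x O = r`, every vector `v` with
`⟪v, x − Π(x,O)⟫ ≤ 0` lies in the tangent cone of `{y : infDist y O ≤ r}` at `x`. -/
theorem stmt7 (O : Set E3) (hOne : O.Nonempty) (hOcomp : IsCompact O) (hOconv : Convex ℝ O)
    (r : ℝ) (hr : 0 < r) (x : E3) (hx : infDist x O = r)
    (p : E3) (hp : p ∈ O) (hproj : ‖x - p‖ = infDist x O)
    (v : E3) (hv : ⟪v, x - p⟫ ≤ 0) :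
    v ∈ tangentConeAt ℝ {y : E3 | infDist y O ≤ r} x := by
  have hxp : ‖x - p‖ = r := hproj.trans hx
  set s : ℕ → ℝ := fun n => ‖x + (n : ℝ)⁻¹ • v - p‖ with hsdef
  set a : ℕ → ℝ := fun n => min 1 (r / s n) with hadef
  have hs0 : ∀ n, 0 ≤ s n := fun n => norm_nonneg _
  have ha0 : ∀ n, 0 ≤ a n := fun n => le_min zero_le_one (div_nonneg hr.le (hs0 n))
  have ha1 : ∀ n, a n ≤ 1 := fun n => min_le_left _ _
  -- the truncated point stays within distance r of p
  have has : ∀ n, a n * s n ≤ r := by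
    intro n
    rcases eq_or_lt_of_le (hs0 n) with h | h
    · rw [← h, mul_zero]; exact hr.le
    · calc a n * s n ≤ (r / s n) * s n :=
            mul_le_mul_of_nonneg_right (min_le_right _ _) (hs0 n)
        _ = r := div_mul_cancel₀ _ h.ne'
  -- squared norm expansion bound
  have key : ∀ n : ℕ, s n ^ 2 ≤ r ^ 2 + ((n : ℝ)⁻¹) ^ 2 * ‖v‖ ^ 2 := by
    intro n
    have hrw : x + (n : ℝ)⁻¹ • v - p = (x - p) + (n : ℝ)⁻¹ • v := by abel
    have hexp : s n ^ 2 = ‖x - p‖ ^ 2 + 2 * ⟪x - p, (n : ℝ)⁻¹ • v⟫ + ‖(n : ℝ)⁻¹ • v‖ ^ 2 := by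
      rw [hsdef]; simp only [hrw]
      exact norm_add_sq_real _ _
    have hip : ⟪x - p, (n : ℝ)⁻¹ • v⟫ = (n : ℝ)⁻¹ * ⟪v, x - p⟫ := by
      rw [real_inner_smul_right, real_inner_comm]
    have hnn : (0:ℝ) ≤ (n : ℝ)⁻¹ := by positivity
    have : 2 * ⟪x - p, (n : ℝ)⁻¹ • v⟫ ≤ 0 := by
      rw [hip]; nlinarith [mul_nonneg hnn (neg_nonneg.mpr hv)]
    have hnv : ‖(n : ℝ)⁻¹ • v‖ ^ 2 = ((n : ℝ)⁻¹) ^ 2 * ‖v‖ ^ 2 := by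
      rw [norm_smul]; simp [mul_pow, abs_of_nonneg hnn]
    rw [hexp, hxp, hnv]; linarith
  refine mem_tangentConeAt_of_seq (atTop : Filter ℕ) (fun n : ℕ => (n : ℝ)) (fun n : ℕ => a n • (x + (n : ℝ)⁻¹ • v - p) - (x - p)) ?_ ?_ ?_
  pick_goal 2
  · -- membership
    filter_upwards with n
    have h1 : x + (a n • (x + (n : ℝ)⁻¹ • v - p) - (x - p))
        = p + a n • (x + (n : ℝ)⁻¹ • v - p) := by abel
    rw [h1]
    refine le_trans (infDist_le_dist_of_mem hp) ?_
    rw [dist_eq_norm]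
    have : p + a n • (x + (n : ℝ)⁻¹ • v - p) - p = a n • (x + (n : ℝ)⁻¹ • v - p) := by abel
    rw [this, norm_smul, Real.norm_eq_abs, abs_of_nonneg (ha0 n)]
    exact has n
  · -- norms tend to infinity
    have hw : Tendsto (fun n : ℕ => x + (n : ℝ)⁻¹ • v - p) atTop (𝓝 (x - p)) := by
      have h0 : Tendsto (fun n : ℕ => (n : ℝ)⁻¹) atTop (𝓝 0) :=
        tendsto_inv_atTop_zero.comp tendsto_natCast_atTop_atTop
      have := ((h0.smul_const v).const_add x).sub_const p
      simpa using this
    have hsr : Tendsto s atTop (𝓝 r) := by rw [← hxp]; exact hw.norm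
    have ha : Tendsto a atTop (𝓝 1) := by
      have := (tendsto_const_nhds (x := (1:ℝ)) (f := atTop (α := ℕ))).min
        ((tendsto_const_nhds (x := r)).div hsr hr.ne')
      simpa [hr.ne'] using this
    have := (ha.smul hw).sub_const (x - p)
    simpa using this
  · -- the rescaled sequence tends to v
    set g : ℕ → ℝ := fun n => (n : ℝ) * (1 - a n) with hgdef
    have hg0 : ∀ n, 0 ≤ g n := fun n =>
      mul_nonneg (Nat.cast_nonneg n) (by linarith [ha1 n])
    have hgle : ∀ᶠ n : ℕ in atTop, g n ≤ ‖v‖ ^ 2 / r ^ 2 * (n : ℝ)⁻¹ := by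
      have hev : ∀ᶠ n : ℕ in atTop, 2 * ‖v‖ / r + 1 ≤ (n : ℝ) :=
        tendsto_natCast_atTop_atTop.eventually_ge_atTop _
      filter_upwards [hev] with n hn
      have hn1 : (1 : ℝ) ≤ (n : ℝ) := by
        have : (0:ℝ) ≤ 2 * ‖v‖ / r := by positivity
        linarith
      have hnpos : (0 : ℝ) < (n : ℝ) := by linarith
      have hT : (0 : ℝ) < (n : ℝ)⁻¹ := by positivity
      have htv : ‖(n : ℝ)⁻¹ • v‖ = (n : ℝ)⁻¹ * ‖v‖ := by
        rw [norm_smul, Real.norm_eq_abs, abs_of_nonneg hT.le]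
      have hlow : r - (n : ℝ)⁻¹ * ‖v‖ ≤ s n := by
        have h := norm_sub_le (x + (n : ℝ)⁻¹ • v - p) ((n : ℝ)⁻¹ • v)
        have heq2 : x + (n : ℝ)⁻¹ • v - p - (n : ℝ)⁻¹ • v = x - p := by abel
        rw [heq2, hxp, htv] at h
        exact sub_le_iff_le_add.mpr h
      have h2v : 2 * ‖v‖ ≤ ((n : ℝ) - 1) * r := by
        have hn' : 2 * ‖v‖ / r ≤ (n : ℝ) - 1 := by linarith
        rwa [div_le_iff₀ hr] at hn'
      have hTv : (n : ℝ)⁻¹ * ‖v‖ ≤ r / 2 := by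
        rw [inv_mul_le_iff₀ hnpos]
        nlinarith
      have hs2 : r / 2 ≤ s n := by linarith
      have hspos : 0 < s n := by linarith
      rcases le_or_gt (s n) r with hcase | hcase
      · have ha1' : a n = 1 := by
          rw [hadef]
          exact min_eq_left ((le_div_iff₀ hspos).mpr (by linarith))
        have : g n = 0 := by rw [hgdef]; simp [ha1']
        rw [this]; positivity
      · have haeq : a n = r / s n :=
          min_eq_right ((div_le_one hspos).mpr hcase.le)
        have hd : s n - r ≤ (n : ℝ)⁻¹ ^ 2 * ‖v‖ ^ 2 / (2 * r) := by
          rw [le_div_iff₀ (by positivity : (0:ℝ) < 2 * r)]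
          nlinarith [key n]
        have h1sub : 1 - a n = (s n - r) / s n := by
          rw [haeq, one_sub_div hspos.ne']
        rw [hgdef]
        simp only [h1sub]
        rw [← mul_div_assoc, div_le_iff₀ hspos]
        calc (n : ℝ) * (s n - r)
            ≤ (n : ℝ) * ((n : ℝ)⁻¹ ^ 2 * ‖v‖ ^ 2 / (2 * r)) :=
              mul_le_mul_of_nonneg_left hd (Nat.cast_nonneg n)
          _ = ‖v‖ ^ 2 / r ^ 2 * (n : ℝ)⁻¹ * (r / 2) := by
              field_simp
          _ ≤ ‖v‖ ^ 2 / r ^ 2 * (n : ℝ)⁻¹ * s n := by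
              exact mul_le_mul_of_nonneg_left hs2 (by positivity)
    have hgz : Tendsto g atTop (𝓝 0) := by
      apply squeeze_zero' (Eventually.of_forall hg0) hgle
      have h0 : Tendsto (fun n : ℕ => (n : ℝ)⁻¹) atTop (𝓝 0) :=
        tendsto_inv_atTop_zero.comp tendsto_natCast_atTop_atTop
      simpa using h0.const_mul (‖v‖ ^ 2 / r ^ 2)
    have hga : Tendsto a atTop (𝓝 1) := by
      have h1a : Tendsto (fun n => 1 - a n) atTop (𝓝 0) := by
        apply squeeze_zero' (Eventually.of_forall fun n => by linarith [ha1 n]) ?_ hgz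
        filter_upwards [eventually_ge_atTop 1] with n hn
        have hn1 : (1 : ℝ) ≤ (n : ℝ) := by exact_mod_cast hn
        have h1an : 0 ≤ 1 - a n := by linarith [ha1 n]
        have hgn : g n = (n : ℝ) * (1 - a n) := rfl
        rw [hgn]
        nlinarith
      have := tendsto_const_nhds (x := (1:ℝ)) (f := atTop (α := ℕ)) |>.sub h1a
      simpa using this
    have heq : ∀ᶠ n : ℕ in atTop,
        (-(g n)) • (x - p) + a n • v
          = (n : ℝ) • (a n • (x + (n : ℝ)⁻¹ • v - p) - (x - p)) := by
      filter_upwards [eventually_ge_atTop 1] with n hn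
      have hn1 : (1 : ℝ) ≤ (n : ℝ) := by exact_mod_cast hn
      have hnT : (n : ℝ) * (n : ℝ)⁻¹ = 1 := mul_inv_cancel₀ (by linarith)
      rw [hgdef]
      match_scalars <;>
        (first
          | ring1
          | linear_combination (a n) * hnT
          | linear_combination (-(a n)) * hnT)
    have hlim : Tendsto (fun n => (-(g n)) • (x - p) + a n • v) atTop (𝓝 v) := by
      have h1 : Tendsto (fun n => (-(g n)) • (x - p)) atTop (𝓝 ((0 : ℝ) • (x - p))) := by
        simpa using hgz.neg.smul_const (x - p)
      have h2 : Tendsto (fun n => a n • v) atTop (𝓝 ((1 : ℝ) • v)) := hga.smul_const v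
      simpa using h1.add h2
    exact hlim.congr' heq
end

section
/- Let O ⊆ ℝ³ be a nonempty compact convex set, r > 0, and x ∈ ℝ³ with infDist x O = r. If the segment [0,x] from the origin to x does not meet the open dilation {y ∈ ℝ³ : infDist y O < r} (i.e., x lies in the exit region, so the straight path to the target does not cross the dilated obstacle), then ⟪x, x − Π(x,O)⟫ ≤ 0. Equivalently, the move-to-target control u = −κ_s x with κ_s > 0 satisfies ⟪u, x − Π(x,O)⟫ ≥ 0. (This is the viability claim for the move-to-target mode at the boundary of the dilated obstacle in the proof of Lemma 3.) -/
open Metric Set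
open scoped RealInnerProductSpace

/-- Viability claim for the move-to-target mode at the boundary of the dilated obstacle
(proof of Lemma 3): if `infDist x O = r` and the segment `[0,x]` does not meet the open
dilation `{y : infDist y O < r}`, then `⟪x, x − Π(x,O)⟫ ≤ 0`; equivalently the control
`u = −κ_s x` with `κ_s > 0` satisfies `⟪u, x − Π(x,O)⟫ ≥ 0`. -/
theorem stmt8 (O : Set E3) (hOne : O.Nonempty) (hOcomp : IsCompact O) (hOconv : Convex ℝ O)
    (r : ℝ) (hr : 0 < r) (x : E3) (hx : infDist x O = r)
    (hseg : segment ℝ 0 x ∩ {y : E3 | infDist y O < r} = ∅)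
    (p : E3) (hp : p ∈ O) (hproj : ‖x - p‖ = infDist x O) :
    ⟪x, x - p⟫ ≤ 0 ∧ ∀ κs : ℝ, 0 < κs → 0 ≤ ⟪-(κs • x), x - p⟫ := by
  have key : ∀ ε : ℝ, 0 < ε → ε ≤ 1 → 2 * ⟪x, x - p⟫ ≤ ε * ‖x‖ ^ 2 := by
    intro ε hε hε1
    set t := 1 - ε with ht
    have htmem : t • x ∈ segment ℝ 0 x := by
      rw [segment_eq_image]
      exact ⟨t, ⟨by linarith, by linarith⟩, by simp⟩
    have h1 : r ≤ infDist (t • x) O := by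
      by_contra h
      push_neg at h
      have hmem : t • x ∈ segment ℝ 0 x ∩ {y : E3 | infDist y O < r} := ⟨htmem, h⟩
      rw [hseg] at hmem
      exact hmem
    have h2 : infDist (t • x) O ≤ ‖t • x - p‖ := by
      rw [← dist_eq_norm]; exact infDist_le_dist_of_mem hp
    have h3 : ‖x - p‖ ≤ ‖t • x - p‖ := by rw [hproj, hx]; linarith
    have hexp : t • x - p = (x - p) + (-ε) • x := by rw [ht]; module
    have h4 : ‖t • x - p‖ ^ 2 = ‖x - p‖ ^ 2 - 2 * ε * ⟪x - p, x⟫ + ε ^ 2 * ‖x‖ ^ 2 := by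
      rw [hexp, norm_add_sq_real, real_inner_smul_right, norm_smul]
      simp [abs_of_pos hε]
      ring
    have h5 : ‖x - p‖ ^ 2 ≤ ‖t • x - p‖ ^ 2 := by
      exact pow_le_pow_left₀ (norm_nonneg _) h3 2
    have hcomm : ⟪x - p, x⟫ = ⟪x, x - p⟫ := real_inner_comm _ _
    rw [h4, hcomm] at h5
    have : 2 * ε * ⟪x, x - p⟫ ≤ ε ^ 2 * ‖x‖ ^ 2 := by linarith
    exact le_of_mul_le_mul_left (by nlinarith) hε
  have hinner : ⟪x, x - p⟫ ≤ 0 := by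
    by_contra hpos
    push_neg at hpos
    have hxne : x ≠ 0 := by
      rintro rfl
      simp at hpos
    have hnx : 0 < ‖x‖ ^ 2 := pow_pos (norm_pos_iff.mpr hxne) 2
    set c := ⟪x, x - p⟫ with hc
    have hε : 0 < min 1 (c / ‖x‖ ^ 2) := lt_min one_pos (div_pos hpos hnx)
    have h := key _ hε (min_le_left _ _)
    have h2 : min 1 (c / ‖x‖ ^ 2) * ‖x‖ ^ 2 ≤ (c / ‖x‖ ^ 2) * ‖x‖ ^ 2 := by
      apply mul_le_mul_of_nonneg_right (min_le_right _ _) (le_of_lt hnx)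
    have h3 : (c / ‖x‖ ^ 2) * ‖x‖ ^ 2 = c := by field_simp
    linarith
  refine ⟨hinner, fun κs hκs => ?_⟩
  rw [inner_neg_left, real_inner_smul_left]
  nlinarith
end

section
/- Let O ⊆ ℝ³ be a nonempty compact convex set, let r_a > 0 and 0 < γ_s < γ, and assume infDist 0 O > r_a. Define the move-to-target flow set F₀ := {x ∈ ℝ³ : infDist x O ≥ r_a + γ_s} ∪ R_e and the move-to-target jump set J₀ := closure(N_{γ_s}(D_{r_a}(O)) ∩ R_l). Then F₀ ∪ J₀ = {x ∈ ℝ³ : infDist x O ≥ r_a}, i.e. the flow and jump sets of the move-to-target mode together cover exactly the robot-centered obstacle-free workspace. (This is the covering identity F₀^W ∪ J₀^W = W_{r_a} established in the proof of Lemma 3, stated for a single obstacle in the whole-space workspace.) -/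
open Metric Set
open scoped RealInnerProductSpace

/-- Covering identity `F₀^W ∪ J₀^W = W_{r_a}` from the proof of Lemma 3: the flow and
jump sets of the move-to-target mode together cover exactly the robot-centered
obstacle-free workspace. -/
theorem stmt9 (O : Set E3) (hOne : O.Nonempty) (hOcomp : IsCompact O) (hOconv : Convex ℝ O)
    (ra γs γ : ℝ) (hra : 0 < ra) (hγs : 0 < γs) (hγsγ : γs < γ)
    (htarget : ra < infDist (0 : E3) O)
    (Rl : Set E3)
    (hRl : Rl = {x : E3 | (ra ≤ infDist x O ∧ infDist x O ≤ ra + γ) ∧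
      (segment ℝ 0 x ∩ interior {y : E3 | infDist y O ≤ ra}).Nonempty})
    (Re : Set E3)
    (hRe : Re = {x : E3 | ra ≤ infDist x O ∧ infDist x O ≤ ra + γ} \ Rl)
    (F0 : Set E3) (hF0 : F0 = {x : E3 | ra + γs ≤ infDist x O} ∪ Re)
    (J0 : Set E3)
    (hJ0 : J0 = closure ({x : E3 | ra ≤ infDist x O ∧ infDist x O ≤ ra + γs} ∩ Rl)) :
    F0 ∪ J0 = {x : E3 | ra ≤ infDist x O} := by
  subst hRl hRe hF0 hJ0
  apply Subset.antisymm
  · rintro x ((hx | hx) | hx)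
    · exact le_trans (by linarith : ra ≤ ra + γs) hx
    · exact hx.1.1
    · refine closure_minimal (fun y hy => hy.1.1)
        (isClosed_le continuous_const (continuous_infDist_pt O)) hx
  · intro x hx
    by_cases h1 : ra + γs ≤ infDist x O
    · exact Or.inl (Or.inl h1)
    · push_neg at h1
      by_cases h2 : (segment ℝ 0 x ∩ interior {y : E3 | infDist y O ≤ ra}).Nonempty
      · exact Or.inr (subset_closure ⟨⟨hx, h1.le⟩, ⟨hx, by linarith⟩, h2⟩)
      · exact Or.inl (Or.inr ⟨⟨hx, by linarith⟩, fun h => h2 h.2⟩)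
end

section
/- Let O ⊆ ℝ³ be a nonempty compact convex set, r > 0 with infDist 0 O > r, let a ∈ ℝ³ with ‖a‖ = 1, and let H := {x ∈ ℝ³ : ⟪a, x⟫ = 0} be the hyperplane through the target 0 orthogonal to a. Assume the slice C := H ∩ D_r(O) is nonempty, and let p ∈ C be a point with ‖p‖ = infDist 0 C (a nearest point of C to the origin). Then the segment [0,p] does not meet the open dilation {y ∈ ℝ³ : infDist y O < r}; in particular, the line segment from the target to the nearest point of the slice stays outside the open r-dilated obstacle. (This is the claim LS ⊆ exit region used in the proof of claim 3 of Lemma 4.) -/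
open Metric Set
open scoped RealInnerProductSpace

/-- Claim `LS ⊆ exit region` used in the proof of claim 3 of Lemma 4: if `p` is a
nearest point to the origin of the slice `C = H ∩ D_r(O)` of the dilated obstacle by the
hyperplane `H` through the target orthogonal to `a`, then the segment `[0,p]` does not
meet the open dilation `{y : infDist y O < r}`. -/
theorem stmt10 (O : Set E3) (hOne : O.Nonempty) (hOcomp : IsCompact O) (hOconv : Convex ℝ O)
    (r : ℝ) (hr : 0 < r) (htarget : r < infDist (0 : E3) O)
    (a : E3) (ha : ‖a‖ = 1)
    (C : Set E3) (hC : C = {x : E3 | ⟪a, x⟫ = 0} ∩ {x : E3 | infDist x O ≤ r})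
    (hCne : C.Nonempty)
    (p : E3) (hpC : p ∈ C) (hpmin : ‖p‖ = infDist (0 : E3) C) :
    segment ℝ 0 p ∩ {y : E3 | infDist y O < r} = ∅ := by
  have hpH : ⟪a, p⟫ = 0 := (hC ▸ hpC).1
  have hpD : infDist p O ≤ r := (hC ▸ hpC).2
  have hp0 : p ≠ 0 := by
    rintro rfl
    exact absurd hpD (not_le.mpr htarget)
  have hpnorm : 0 < ‖p‖ := norm_pos_iff.mpr hp0
  ext q
  simp only [mem_inter_iff, mem_setOf_eq, mem_empty_iff_false, iff_false, not_and]
  intro hqseg hqlt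
  rw [segment_eq_image] at hqseg
  obtain ⟨t, ⟨ht0, ht1⟩, hq⟩ := hqseg
  simp only [smul_zero, zero_add] at hq
  subst hq
  -- q = t • p is in C
  have hqC : t • p ∈ C := by
    rw [hC]
    refine ⟨?_, le_of_lt hqlt⟩
    show ⟪a, t • p⟫ = 0
    rw [real_inner_smul_right, hpH, mul_zero]
  have hle : ‖p‖ ≤ ‖t • p‖ := by
    rw [hpmin]
    calc infDist (0 : E3) C ≤ dist 0 (t • p) := infDist_le_dist_of_mem hqC
    _ = ‖t • p‖ := by simp
  have hnorm : ‖t • p‖ = t * ‖p‖ := by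
    rw [norm_smul, Real.norm_eq_abs, abs_of_nonneg ht0]
  have ht1' : t = 1 := by
    rw [hnorm] at hle
    nlinarith
  subst ht1'
  rw [one_smul] at hqlt
  -- now infDist p O < r; move p slightly toward the origin for a contradiction
  set d := infDist p O with hd
  set ε : ℝ := min 1 ((r - d) / (2 * ‖p‖)) with hε
  have hεpos : 0 < ε := lt_min one_pos (div_pos (by linarith) (by positivity))
  have hε1 : ε ≤ 1 := min_le_left _ _
  have hεle : ε * ‖p‖ ≤ (r - d) / 2 := by
    have := min_le_right 1 ((r - d) / (2 * ‖p‖))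
    calc ε * ‖p‖ ≤ ((r - d) / (2 * ‖p‖)) * ‖p‖ := by
          exact mul_le_mul_of_nonneg_right this (le_of_lt hpnorm)
      _ = (r - d) / 2 := by field_simp
  set q' : E3 := (1 - ε) • p with hq'
  have hdistq' : dist q' p = ε * ‖p‖ := by
    rw [dist_eq_norm, hq']
    have : (1 - ε) • p - p = (-ε) • p := by
      rw [sub_smul, one_smul, neg_smul]; abel
    rw [this, norm_smul, Real.norm_eq_abs, abs_neg, abs_of_nonneg (le_of_lt hεpos)]
  have hq'D : infDist q' O < r := by
    calc infDist q' O ≤ infDist p O + dist q' p := infDist_le_infDist_add_dist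
      _ = d + ε * ‖p‖ := by rw [hdistq']
      _ ≤ d + (r - d) / 2 := by linarith
      _ < r := by linarith
  have hq'C : q' ∈ C := by
    rw [hC]
    refine ⟨?_, le_of_lt hq'D⟩
    show ⟪a, q'⟫ = 0
    rw [hq', real_inner_smul_right, hpH, mul_zero]
  have : ‖p‖ ≤ ‖q'‖ := by
    rw [hpmin]
    calc infDist (0 : E3) C ≤ dist 0 q' := infDist_le_dist_of_mem hq'C
    _ = ‖q'‖ := by simp
  have hq'norm : ‖q'‖ = (1 - ε) * ‖p‖ := by
    rw [hq', norm_smul, Real.norm_eq_abs, abs_of_nonneg (by linarith)]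
  nlinarith
end

section
/- Let O ⊆ ℝ³ be a nonempty compact convex set, r > 0, a ∈ ℝ³ with ‖a‖ = 1, h ∈ ℝ³, and let H := {x ∈ ℝ³ : ⟪a, x − h⟫ = 0}. Assume H ∩ interior(D_r(O)) ≠ ∅. Then for every x ∈ H with infDist x O = r, the vector v := P(a)(x − Π(x,O)) satisfies ⟪v, x − Π(x,O)⟫ > 0 and v ∈ tangentConeAt ℝ {y ∈ ℝ³ : infDist y O ≥ r} x. (This is the viability condition for the obstacle-avoidance control u = κ_r P(a) x_π at the inner boundary, where η = 1, established in the proof of Lemma 4.) -/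
open Metric Set
open scoped RealInnerProductSpace

/-- Supporting halfspace bound: if `p` is a nearest point of the convex set `O` to `x`,
then for any `y`, `⟪x - p, y - p⟫ ≤ ‖x - p‖ * infDist y O`. -/
lemma half_bound (O : Set E3) (hOne : O.Nonempty) (hOconv : Convex ℝ O)
    {x p : E3} (hp : p ∈ O) (hproj : ‖x - p‖ = infDist x O) (y : E3) :
    ⟪x - p, y - p⟫ ≤ ‖x - p‖ * infDist y O := by
  have hsupp : ∀ w ∈ O, ⟪x - p, w - p⟫ ≤ 0 := by
    have h1 : ‖x - p‖ = ⨅ w : O, ‖x - w‖ := by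
      rw [hproj, infDist_eq_iInf]
      simp only [dist_eq_norm]
    exact (norm_eq_iInf_iff_real_inner_le_zero hOconv hp).mp h1
  have key : ∀ w ∈ O, ⟪x - p, y - p⟫ ≤ ‖x - p‖ * dist y w := by
    intro w hw
    have h2 : ⟪x - p, y - p⟫ = ⟪x - p, y - w⟫ + ⟪x - p, w - p⟫ := by
      rw [← inner_add_right]
      congr 1
      abel
    calc ⟪x - p, y - p⟫ = ⟪x - p, y - w⟫ + ⟪x - p, w - p⟫ := h2
      _ ≤ ⟪x - p, y - w⟫ := by linarith [hsupp w hw]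
      _ ≤ ‖x - p‖ * ‖y - w‖ := real_inner_le_norm _ _
      _ = ‖x - p‖ * dist y w := by rw [dist_eq_norm]
  by_contra hlt
  push_neg at hlt
  have hn : 0 < ‖x - p‖ := by
    rcases (norm_nonneg (x - p)).lt_or_eq with h | h
    · exact h
    · exfalso
      have h0 : x - p = 0 := by
        rw [← norm_eq_zero]; exact h.symm
      rw [h0] at hlt
      simp only [inner_zero_left, norm_zero, zero_mul] at hlt
      exact lt_irrefl _ hlt
  have hlt2 : infDist y O < ⟪x - p, y - p⟫ / ‖x - p‖ := by
    rw [lt_div_iff₀ hn]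
    linarith [hlt]
  obtain ⟨w, hw, hdw⟩ := (infDist_lt_iff hOne).mp hlt2
  have hk := key w hw
  have : ‖x - p‖ * dist y w < ⟪x - p, y - p⟫ := by
    have := (mul_lt_mul_iff_right₀ hn).mpr hdw
    rwa [mul_div_cancel₀ _ hn.ne'] at this
  linarith

/-- A point in the interior of the `r`-dilation has distance strictly less than `r`. -/
lemma interior_lt (O : Set E3) (hOne : O.Nonempty) (hOcomp : IsCompact O) (hOconv : Convex ℝ O)
    (r : ℝ) (hr : 0 < r) {z : E3} (hz : z ∈ interior {x : E3 | infDist x O ≤ r}) :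
    infDist z O < r := by
  have hle : infDist z O ≤ r := by have := interior_subset hz; exact this
  rcases lt_or_eq_of_le hle with hlt | heq
  · exact hlt
  exfalso
  obtain ⟨q, hq, hdq⟩ := hOcomp.exists_infDist_eq_dist hOne z
  have hzq : ‖z - q‖ = infDist z O := by rw [hdq, dist_eq_norm]
  have hzqr : ‖z - q‖ = r := by rw [hzq, heq]
  obtain ⟨δ, hδ, hball⟩ := Metric.mem_nhds_iff.mp (mem_interior_iff_mem_nhds.mp hz)
  set ε := min (δ / 2) r with hε
  have hεpos : 0 < ε := lt_min (by linarith) hr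
  have hεδ : ε < δ := lt_of_le_of_lt (min_le_left _ _) (by linarith)
  set z' := z + (ε / r) • (z - q) with hz'
  have hz'mem : infDist z' O ≤ r := by
    have : z' ∈ Metric.ball z δ := by
      rw [Metric.mem_ball, dist_eq_norm]
      have : z' - z = (ε / r) • (z - q) := by rw [hz']; abel
      rw [this, norm_smul, hzqr]
      rw [Real.norm_eq_abs, abs_of_pos (div_pos hεpos hr)]
      rw [div_mul_cancel₀ _ hr.ne']
      exact hεδ
    exact hball this
  have hb := half_bound O hOne hOconv hq hzq z'
  have hinner : ⟪z - q, z' - q⟫ = r ^ 2 + ε * r := by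
    have h1 : z' - q = (z - q) + (ε / r) • (z - q) := by rw [hz']; abel
    rw [h1, inner_add_right, real_inner_smul_right, real_inner_self_eq_norm_sq, hzqr]
    field_simp
  rw [hinner, hzqr] at hb
  nlinarith

/-- Viability condition for the obstacle-avoidance control `u = κ_r P(a) x_π` at the
inner boundary (η = 1), from the proof of Lemma 4: if the hyperplane `H` through `h`
orthogonal to `a` meets the interior of `D_r(O)`, then at every `x ∈ H` with
`infDist x O = r`, the vector `v = P(a)(x − Π(x,O))` satisfies `⟪v, x − Π(x,O)⟫ > 0`
and lies in the tangent cone of `{y : infDist y O ≥ r}` at `x`. -/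
theorem stmt11 (O : Set E3) (hOne : O.Nonempty) (hOcomp : IsCompact O) (hOconv : Convex ℝ O)
    (r : ℝ) (hr : 0 < r) (a h : E3) (ha : ‖a‖ = 1)
    (H : Set E3) (hH : H = {x : E3 | ⟪a, x - h⟫ = 0})
    (hHint : (H ∩ interior {x : E3 | infDist x O ≤ r}).Nonempty)
    (x : E3) (hxH : x ∈ H) (hx : infDist x O = r)
    (p : E3) (hp : p ∈ O) (hproj : ‖x - p‖ = infDist x O) :
    0 < ⟪Pproj a (x - p), x - p⟫ ∧
    Pproj a (x - p) ∈ tangentConeAt ℝ {y : E3 | r ≤ infDist y O} x := by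
  set t : ℝ := ⟪a, x - p⟫ with ht
  set v : E3 := Pproj a (x - p) with hv
  have hxpr : ‖x - p‖ = r := by rw [hproj, hx]
  have hdecomp : x - p = v + t • a := by
    rw [hv, Pproj, ← ht]; abel
  have haa : ⟪a, a⟫ = (1 : ℝ) := by
    rw [real_inner_self_eq_norm_sq, ha]; norm_num
  have hva : ⟪v, a⟫ = 0 := by
    rw [hv, Pproj, inner_sub_left, real_inner_smul_left, ← ht, haa, real_inner_comm]
    ring
  have hvinner : ⟪v, x - p⟫ = ‖v‖ ^ 2 := by
    rw [hdecomp, inner_add_right, real_inner_smul_right, hva, real_inner_self_eq_norm_sq]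
    ring
  -- key supporting halfspace bound
  have key : ∀ y : E3, ⟪x - p, y - p⟫ ≤ r * infDist y O := by
    intro y
    have := half_bound O hOne hOconv hp hproj y
    rwa [hxpr] at this
  -- v ≠ 0
  have hvne : v ≠ 0 := by
    intro hv0
    have hxpa : x - p = t • a := by rw [hdecomp, hv0]; abel
    have ht2 : t ^ 2 = r ^ 2 := by
      have h1 : ⟪x - p, x - p⟫ = r ^ 2 := by
        rw [real_inner_self_eq_norm_sq, hxpr]
      rw [hxpa, real_inner_smul_left, real_inner_smul_right, haa] at h1
      nlinarith
    obtain ⟨z, hzH, hzint⟩ := hHint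
    have hzlt : infDist z O < r := interior_lt O hOne hOcomp hOconv r hr hzint
    have hax : ⟪a, x - h⟫ = 0 := by rw [hH] at hxH; exact hxH
    have haz : ⟪a, z - h⟫ = 0 := by rw [hH] at hzH; exact hzH
    have hazx : ⟪a, z - x⟫ = 0 := by
      have : z - x = (z - h) - (x - h) := by abel
      rw [this, inner_sub_right, hax, haz]; ring
    have hazp : ⟪a, z - p⟫ = t := by
      have : z - p = (z - x) + (x - p) := by abel
      rw [this, inner_add_right, hazx, ← ht]; ring
    have hkey := key z
    rw [hxpa, real_inner_smul_left, hazp] at hkey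
    nlinarith
  have hvpos : 0 < ⟪v, x - p⟫ := by
    rw [hvinner]
    exact pow_pos (norm_pos_iff.mpr hvne) 2
  refine ⟨hvpos, ?_⟩
  -- segment from x to x + v stays in the set
  have hseg : segment ℝ x (x + v) ⊆ {y : E3 | r ≤ infDist y O} := by
    intro y hy
    rw [segment_eq_image'] at hy
    obtain ⟨θ, ⟨hθ0, hθ1⟩, rfl⟩ := hy
    simp only [add_sub_cancel_left]
    have hkey := key (x + θ • v)
    have hinner : ⟪x - p, x + θ • v - p⟫ = r ^ 2 + θ * ‖v‖ ^ 2 := by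
      have h1 : x + θ • v - p = (x - p) + θ • v := by abel
      rw [h1, inner_add_right, real_inner_smul_right, real_inner_self_eq_norm_sq,
        real_inner_comm, hvinner, hxpr]
    rw [hinner] at hkey
    have : r ^ 2 ≤ r * infDist (x + θ • v) O := by nlinarith [sq_nonneg ‖v‖]
    rw [mem_setOf_eq]
    nlinarith
  have := mem_tangentConeAt_of_segment_subset hseg
  simpa using this
end

section
/- Let O ⊆ ℝ³ be a nonempty compact convex set, r > 0, a ∈ ℝ³ with ‖a‖ = 1, h ∈ ℝ³, and let H := {x ∈ ℝ³ : ⟪a, x − h⟫ = 0}. Assume H ∩ interior(D_r(O)) ≠ ∅. Then for every x ∈ H with infDist x O = r, the vector v := −P(a)(x − Π(x,O)) satisfies ⟪v, x − Π(x,O)⟫ < 0 and v ∈ tangentConeAt ℝ {y ∈ ℝ³ : infDist y O ≤ r} x. (This is the viability condition for the obstacle-avoidance control u = −κ_r P(a) x_π at the outer boundary, where η = −1, established in the proof of Lemma 4.) -/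
open Metric Set
open scoped RealInnerProductSpace

set_option maxHeartbeats 1000000

/-- Viability condition for the obstacle-avoidance control `u = −κ_r P(a) x_π` at the
outer boundary (η = −1), from the proof of Lemma 4: if the hyperplane `H` through `h`
orthogonal to `a` meets the interior of `D_r(O)`, then at every `x ∈ H` with
`infDist x O = r`, the vector `v = −P(a)(x − Π(x,O))` satisfies `⟪v, x − Π(x,O)⟫ < 0`
and lies in the tangent cone of `{y : infDist y O ≤ r}` at `x`. -/
theorem stmt12 (O : Set E3) (hOne : O.Nonempty) (hOcomp : IsCompact O) (hOconv : Convex ℝ O)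
    (r : ℝ) (hr : 0 < r) (a h : E3) (ha : ‖a‖ = 1)
    (H : Set E3) (hH : H = {x : E3 | ⟪a, x - h⟫ = 0})
    (hHint : (H ∩ interior {x : E3 | infDist x O ≤ r}).Nonempty)
    (x : E3) (hxH : x ∈ H) (hx : infDist x O = r)
    (p : E3) (hp : p ∈ O) (hproj : ‖x - p‖ = infDist x O) :
    ⟪-Pproj a (x - p), x - p⟫ < 0 ∧
    -Pproj a (x - p) ∈ tangentConeAt ℝ {y : E3 | infDist y O ≤ r} x := by
  subst hH
  obtain ⟨w, hw⟩ : ∃ w : E3, x - p = w := ⟨_, rfl⟩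
  have hwn : ‖w‖ = r := by rw [← hw, hproj, hx]
  have hw0 : w ≠ 0 := by
    intro h0; rw [h0, norm_zero] at hwn; exact hr.ne hwn
  -- nearest-point inequality
  have hq : ∀ q ∈ O, ⟪w, q - p⟫ ≤ 0 := by
    have h1 : ‖x - p‖ = ⨅ q : O, ‖x - q‖ := by
      rw [hproj, infDist_eq_iInf]
      exact iInf_congr fun q => dist_eq_norm x q
    rw [hw] at h1
    have h2 := (norm_eq_iInf_iff_real_inner_le_zero hOconv hp (u := x)).1 (by rw [hw]; exact h1)
    intro q hq'
    have := h2 q hq'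
    rwa [hw] at this
  -- supporting hyperplane inequality
  have hsupp : ∀ y : E3, infDist y O ≤ r → ⟪w, y - x⟫ ≤ 0 := by
    intro y hy
    obtain ⟨q, hqO, hqd⟩ := hOcomp.exists_infDist_eq_dist hOne y
    have hyq : ‖y - q‖ ≤ r := by rw [← dist_eq_norm, ← hqd]; exact hy
    have h1 : ⟪w, y - q⟫ ≤ r * r := by
      calc ⟪w, y - q⟫ ≤ ‖w‖ * ‖y - q‖ := real_inner_le_norm _ _
        _ ≤ r * r := by rw [hwn]; exact mul_le_mul_of_nonneg_left hyq hr.le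
    have h2 := hq q hqO
    have h3 : ⟪w, p - x⟫ = -(r * r) := by
      have hpx : p - x = -w := by rw [← hw]; abel
      rw [hpx, inner_neg_right, real_inner_self_eq_norm_mul_norm, hwn]
    have h4 : y - x = (y - q) + ((q - p) + (p - x)) := by abel
    rw [h4, inner_add_right, inner_add_right, h3]
    linarith
  -- w is not parallel to a
  have hnotpar : ∀ c : ℝ, w ≠ c • a := by
    intro c hc
    obtain ⟨z, hz1, hz2⟩ := hHint
    have hzx : ⟪a, z - x⟫ = 0 := by
      have e : z - x = (z - h) - (x - h) := by abel
      rw [e, inner_sub_right, hz1, hxH, sub_zero]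
    have hwzx : ⟪w, z - x⟫ = 0 := by
      rw [hc, real_inner_smul_left, hzx, mul_zero]
    obtain ⟨ε, hε, hball⟩ := Metric.mem_nhds_iff.1 (mem_interior_iff_mem_nhds.1 hz2)
    have hwpos : 0 < ‖w‖ := norm_pos_iff.2 hw0
    set t : ℝ := ε / (2 * ‖w‖) with ht
    have ht0 : 0 < t := div_pos hε (by positivity)
    have hmem : z + t • w ∈ {y : E3 | infDist y O ≤ r} := by
      apply hball
      rw [Metric.mem_ball, dist_eq_norm]
      have e2 : z + t • w - z = t • w := by abel
      rw [e2, norm_smul, Real.norm_eq_abs, abs_of_pos ht0, ht]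
      rw [div_mul_eq_mul_div, mul_comm]
      rw [div_lt_iff₀ (by positivity)]
      nlinarith
    have hle := hsupp (z + t • w) hmem
    have e2 : z + t • w - x = (z - x) + t • w := by abel
    rw [e2, inner_add_right, hwzx, zero_add, real_inner_smul_right,
      real_inner_self_eq_norm_mul_norm] at hle
    nlinarith [mul_pos ht0 (mul_pos hwpos hwpos)]
  obtain ⟨s, hs⟩ : ∃ s : ℝ, ⟪a, w⟫ = s := ⟨_, rfl⟩
  have hs1 : s < r := by
    have h1 : ⟪a, w⟫ < ‖a‖ * ‖w‖ := by
      rw [inner_lt_norm_mul_iff_real]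
      intro hcon
      rw [ha, one_smul] at hcon
      exact hnotpar ‖w‖ hcon.symm
    rwa [ha, one_mul, hwn, hs] at h1
  have hs2 : -r < s := by
    have h1 : ⟪-a, w⟫ < ‖-a‖ * ‖w‖ := by
      rw [inner_lt_norm_mul_iff_real]
      intro hcon
      rw [norm_neg, ha, one_smul, smul_neg] at hcon
      apply hnotpar (-‖w‖)
      rw [neg_smul]
      exact hcon.symm
    rw [inner_neg_left, norm_neg, ha, one_mul, hwn, hs] at h1
    linarith
  have hss : s * s < r * r := by nlinarith
  have hveq : -Pproj a (x - p) = s • a - w := by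
    rw [Pproj, hw, hs, neg_sub]
  have hvw : ⟪s • a - w, w⟫ = s * s - r * r := by
    rw [inner_sub_left, real_inner_smul_left, real_inner_self_eq_norm_mul_norm, hwn, hs]
  constructor
  · rw [hveq, hw, hvw]
    linarith
  · rw [hveq]
    obtain ⟨v, hv⟩ : ∃ v : E3, s • a - w = v := ⟨_, rfl⟩
    rw [hv] at hvw ⊢
    have hv0 : v ≠ 0 := by
      intro h0
      rw [h0, inner_zero_left] at hvw
      nlinarith
    have hvpos : 0 < ‖v‖ := norm_pos_iff.2 hv0
    obtain ⟨t₀, ht₀⟩ : ∃ t₀ : ℝ, (r * r - s * s) / (‖v‖ * ‖v‖) = t₀ := ⟨_, rfl⟩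
    have ht₀pos : 0 < t₀ := by rw [← ht₀]; exact div_pos (by linarith) (by positivity)
    have hmem : ∀ t : ℝ, 0 ≤ t → t ≤ t₀ → x + t • v ∈ {y : E3 | infDist y O ≤ r} := by
      intro t htn htt
      have hxy : x + t • v - p = w + t • v := by rw [← hw]; abel
      have hnsq : ‖w + t • v‖ ^ 2 = r * r + 2 * (t * (s * s - r * r)) + t ^ 2 * (‖v‖ * ‖v‖) := by
        rw [norm_add_sq_real, real_inner_smul_right, hwn, norm_smul, Real.norm_eq_abs,
          abs_of_nonneg htn, real_inner_comm, hvw]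
        ring
      have h1 : t * (‖v‖ * ‖v‖) ≤ r * r - s * s := by
        rw [← ht₀] at htt
        exact (le_div_iff₀ (by positivity)).1 htt
      have hle : ‖w + t • v‖ ^ 2 ≤ r ^ 2 := by
        rw [hnsq]
        nlinarith [mul_le_mul_of_nonneg_left h1 htn]
      have hle2 : ‖w + t • v‖ ≤ r := by nlinarith [norm_nonneg (w + t • v)]
      have hd : infDist (x + t • v) O ≤ dist (x + t • v) p := infDist_le_dist_of_mem hp
      rw [dist_eq_norm, hxy] at hd
      exact le_trans hd hle2
    -- direct tangent cone construction
    refine mem_tangentConeAt_iff_exists_seq_norm_tendsto_atTop.2 ⟨fun n => (n : ℝ), fun n => ((n : ℝ))⁻¹ • v, ?_, ?_, ?_⟩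
    swap
    · obtain ⟨N, hN2⟩ := exists_nat_ge (t₀)⁻¹
      filter_upwards [Filter.eventually_ge_atTop (max 1 N)] with n hn
      have hn1 : (1 : ℕ) ≤ n := le_trans (le_max_left 1 N) hn
      have hnpos : (0 : ℝ) < n := by exact_mod_cast hn1
      have h1 : (t₀)⁻¹ ≤ (n : ℝ) :=
        le_trans hN2 (by exact_mod_cast le_trans (le_max_right 1 N) hn)
      have h2 : ((n : ℝ))⁻¹ ≤ t₀ := by
        have h3 := inv_anti₀ (inv_pos.2 ht₀pos) h1
        rwa [inv_inv] at h3
      exact hmem _ (by positivity) h2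
    · have : (fun n : ℕ => ‖(n : ℝ)‖) = fun n : ℕ => (n : ℝ) := by
        funext n; exact Real.norm_natCast n
      rw [this]
      exact tendsto_natCast_atTop_atTop
    · apply Filter.Tendsto.congr' _ tendsto_const_nhds
      filter_upwards [Filter.eventually_ge_atTop 1] with n hn
      have hn0 : (n : ℝ) ≠ 0 := by
        have : (0:ℕ) < n := hn
        exact_mod_cast this.ne'
      rw [smul_smul, mul_inv_cancel₀ hn0, one_smul]
end
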